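/- Let n ≥ 2 and let C ≥ 1. Let x_0 ∈ ℝ^n satisfy x_{0,i} ≥ 0 for all i, ∑_{i=1}^n x_{0,i} = 1, and max_{1≤i≤n} x_{0,i} ≤ C/n. Then for the repeated averaging chain started at x_0, with T(k) = ∑_{i=1}^n |x_{k,i} − 1/n|, the expectation under μ_n satisfies E(T(k)) ≤ √C · e^{−k/(2n)} for every k ≥ 0. -/

import Mathlib

open MeasureTheory Finset Filter
open scoped ENNReal NNReal

/-- The set of unordered pairs of distinct indices in `Fin n`, encoded as
2-element subsets of `Fin n`. -/
abbrev Pairs (n : ℕ) : Type := {s : Finset (Fin n) // s.card = 2}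

instance (n : ℕ) : MeasurableSpace (Pairs n) := ⊤

/-- The uniform probability measure on the set of pairs. -/
noncomputable def uniformPair (n : ℕ) : Measure (Pairs n) :=
  (Fintype.card (Pairs n) : ℝ≥0∞)⁻¹ • Measure.count

/-- `μ` is the infinite product over `ℕ` of the uniform measure on pairs:
its finite-dimensional marginals are the finite uniform product measures.
(This characterizes the infinite product measure uniquely.) -/
def IsProductLaw (n : ℕ) (μ : Measure (ℕ → Pairs n)) : Prop :=
  ∀ K : ℕ, μ.map (fun ω (i : Fin K) => ω i) = Measure.pi fun _ : Fin K => uniformPair n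

/-- The pair-averaging operation: both coordinates in `s` (a 2-element set `{i,j}`)
are replaced by `(x i + x j)/2`; the other coordinates are unchanged. -/
noncomputable def avgStep {n : ℕ} (s : Finset (Fin n)) (x : Fin n → ℝ) : Fin n → ℝ :=
  fun l => if l ∈ s then (∑ m ∈ s, x m) / 2 else x l

/-- The repeated averaging chain started at `x0`, driven by the pair sequence `ω`. -/
noncomputable def chain {n : ℕ} (x0 : Fin n → ℝ) (ω : ℕ → Pairs n) : ℕ → Fin n → ℝ
  | 0 => x0
  | k + 1 => avgStep (ω k).1 (chain x0 ω k)

/-- `T(k) = ∑_i |x_{k,i} - 1/n|`. -/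
noncomputable def Tdist {n : ℕ} (x0 : Fin n → ℝ) (ω : ℕ → Pairs n) (k : ℕ) : ℝ :=
  ∑ i, |chain x0 ω k i - 1 / n|

/-- The initial vector `(1,0,…,0)`. -/
def e1 (n : ℕ) : Fin n → ℝ := fun i => if i.val = 0 then 1 else 0

/-- The standard normal cumulative distribution function. -/
noncomputable def stdGaussianCDF (x : ℝ) : ℝ :=
  ∫ t in Set.Iic x, (2 * Real.pi) ^ (-(1:ℝ)/2) * Real.exp (-t ^ 2 / 2)

noncomputable def Vfun (n : ℕ) (x : Fin n → ℝ) : ℝ := ∑ i, (x i - 1 / n) ^ 2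

section pairsLemmas
variable {n : ℕ}

lemma sum_avgStep {s : Finset (Fin n)} (hs : s.card = 2) (x : Fin n → ℝ) :
    ∑ i, avgStep s x i = ∑ i, x i := by
  classical
  obtain ⟨a, b, hab, rfl⟩ := Finset.card_eq_two.mp hs
  have key : ∀ f : Fin n → ℝ, ∑ i ∈ univ \ {a, b}, f i + (f a + f b) = ∑ i, f i := by
    intro f
    rw [← Finset.sum_pair hab, Finset.sum_sdiff (Finset.subset_univ _)]
  rw [← key (avgStep {a, b} x), ← key x]
  have h1 : ∑ i ∈ univ \ {a, b}, avgStep {a, b} x i = ∑ i ∈ univ \ {a, b}, x i := by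
    apply Finset.sum_congr rfl
    intro i hi
    simp only [Finset.mem_sdiff, Finset.mem_insert, Finset.mem_singleton, not_or] at hi
    simp [avgStep, hi.2.1, hi.2.2]
  have hsum2 : ∑ m ∈ ({a, b} : Finset (Fin n)), x m = x a + x b := Finset.sum_pair hab
  have ha : avgStep {a, b} x a = (x a + x b) / 2 := by simp [avgStep, hsum2]
  have hb : avgStep {a, b} x b = (x a + x b) / 2 := by simp [avgStep, hsum2]
  rw [h1, ha, hb]; ring

lemma V_avg_pair {a b : Fin n} (hab : a ≠ b) (x : Fin n → ℝ) :
    Vfun n (avgStep {a, b} x) = Vfun n x - (x a - x b) ^ 2 / 2 := by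
  classical
  have key : ∀ f : Fin n → ℝ, ∑ i ∈ univ \ {a, b}, f i + (f a + f b) = ∑ i, f i := by
    intro f
    rw [← Finset.sum_pair hab, Finset.sum_sdiff (Finset.subset_univ _)]
  unfold Vfun
  rw [← key (fun i => (avgStep {a, b} x i - 1 / n) ^ 2),
      ← key (fun i => (x i - 1 / n) ^ 2)]
  have h1 : ∑ i ∈ univ \ {a, b}, (avgStep {a, b} x i - 1 / (n:ℝ)) ^ 2
      = ∑ i ∈ univ \ {a, b}, (x i - 1 / (n:ℝ)) ^ 2 := by
    apply Finset.sum_congr rfl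
    intro i hi
    simp only [Finset.mem_sdiff, Finset.mem_insert, Finset.mem_singleton, not_or] at hi
    simp [avgStep, hi.2.1, hi.2.2]
  have hsum2 : ∑ m ∈ ({a, b} : Finset (Fin n)), x m = x a + x b := Finset.sum_pair hab
  have ha : avgStep {a, b} x a = (x a + x b) / 2 := by simp [avgStep, hsum2]
  have hb : avgStep {a, b} x b = (x a + x b) / 2 := by simp [avgStep, hsum2]
  simp only [h1, ha, hb]
  ring

lemma sum_offDiag_eq_prod {ι : Type*} [DecidableEq ι] (t : Finset ι) (F : ι × ι → ℝ)
    (hF : ∀ i, F (i, i) = 0) : ∑ p ∈ t.offDiag, F p = ∑ p ∈ t ×ˢ t, F p := by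
  apply Finset.sum_subset
  · intro p hp
    rw [Finset.mem_offDiag] at hp
    exact Finset.mem_product.mpr ⟨hp.1, hp.2.1⟩
  · intro p hp hnp
    rw [Finset.mem_product] at hp
    rw [Finset.mem_offDiag] at hnp
    push_neg at hnp
    have : p.1 = p.2 := hnp hp.1 hp.2
    have hp2 : p = (p.1, p.1) := by rw [Prod.ext_iff]; exact ⟨rfl, this.symm⟩
    rw [hp2, hF]

lemma V_avg (s : Pairs n) (x : Fin n → ℝ) :
    Vfun n (avgStep s.1 x) = Vfun n x - (∑ p ∈ s.1.offDiag, (x p.1 - x p.2) ^ 2) / 4 := by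
  classical
  obtain ⟨a, b, hab, hs⟩ := Finset.card_eq_two.mp s.2
  have hoff : ∑ p ∈ s.1.offDiag, (x p.1 - x p.2) ^ 2 = 2 * (x a - x b) ^ 2 := by
    rw [hs, sum_offDiag_eq_prod _ _ (fun i => by ring), Finset.sum_product,
        Finset.sum_pair hab, Finset.sum_pair hab, Finset.sum_pair hab]
    ring
  rw [hoff, hs, V_avg_pair hab x]
  ring

lemma sum_pairs_offDiag (s0 : Pairs n) (F : Fin n × Fin n → ℝ) (hF : ∀ i, F (i, i) = 0) :
    ∑ s : Pairs n, ∑ p ∈ (s.1).offDiag, F p = ∑ p ∈ (univ : Finset (Fin n)).offDiag, F p := by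
  classical
  set g : Fin n × Fin n → Pairs n := fun p =>
    if h : p.1 ≠ p.2 then ⟨{p.1, p.2}, Finset.card_pair h⟩ else s0 with hg
  have hfil : ∀ s : Pairs n,
      Finset.filter (fun p => g p = s) (univ : Finset (Fin n)).offDiag = s.1.offDiag := by
    intro s
    ext p
    constructor
    · intro hp
      rw [Finset.mem_filter] at hp
      obtain ⟨hpo, hgs⟩ := hp
      rw [Finset.mem_offDiag] at hpo
      have hne : p.1 ≠ p.2 := hpo.2.2
      rw [hg] at hgs; simp only [dif_pos hne] at hgs
      have h1 : s.1 = {p.1, p.2} := by rw [← hgs]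
      rw [Finset.mem_offDiag]
      exact ⟨by rw [h1]; simp, by rw [h1]; simp, hne⟩
    · intro hp
      rw [Finset.mem_offDiag] at hp
      obtain ⟨h1, h2, hne⟩ := hp
      rw [Finset.mem_filter, Finset.mem_offDiag]
      refine ⟨⟨Finset.mem_univ _, Finset.mem_univ _, hne⟩, ?_⟩
      rw [hg]; simp only [dif_pos hne]
      exact Subtype.ext (Finset.eq_of_subset_of_card_le
        (Finset.insert_subset h1 (Finset.singleton_subset_iff.mpr h2))
        (by rw [s.2, Finset.card_pair hne]))
  rw [← Finset.sum_fiberwise (univ : Finset (Fin n)).offDiag g F]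
  exact Finset.sum_congr rfl fun s _ => by rw [hfil s]

lemma sum_sq_diff (hn : (n : ℝ) ≠ 0) (x : Fin n → ℝ) (hx : ∑ i, x i = 1) :
    ∑ p ∈ (univ : Finset (Fin n)).offDiag, (x p.1 - x p.2) ^ 2 = 2 * n * Vfun n x := by
  classical
  set y : Fin n → ℝ := fun i => x i - 1 / n with hy
  have hysum : ∑ i, y i = 0 := by
    rw [hy]
    simp only [Finset.sum_sub_distrib, hx, Finset.sum_const, Finset.card_univ,
      Fintype.card_fin, nsmul_eq_mul]
    field_simp
    norm_num
  have hdiff : ∀ i j, x i - x j = y i - y j := by intro i j; rw [hy]; ring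
  rw [sum_offDiag_eq_prod _ _ (fun i => by ring), Finset.sum_product]
  have hVy : Vfun n x = ∑ i, y i ^ 2 := rfl
  calc ∑ i, ∑ j, (x i - x j) ^ 2 = ∑ i, ∑ j, (y i ^ 2 - 2 * y i * y j + y j ^ 2) := by
        apply Finset.sum_congr rfl; intro i _; apply Finset.sum_congr rfl; intro j _
        rw [hdiff]; ring
    _ = ∑ i, ((n : ℝ) * y i ^ 2 - 2 * y i * (∑ j, y j) + ∑ j, y j ^ 2) := by
        apply Finset.sum_congr rfl; intro i _
        rw [Finset.sum_add_distrib, Finset.sum_sub_distrib, Finset.sum_const,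
          Finset.card_univ, Fintype.card_fin, ← Finset.mul_sum, nsmul_eq_mul]
        try ring
    _ = 2 * n * Vfun n x := by
        simp only [hysum, mul_zero, sub_zero, Finset.sum_add_distrib, ← Finset.mul_sum,
          Finset.sum_const, Finset.card_univ, Fintype.card_fin, nsmul_eq_mul, hVy]
        try ring

end pairsLemmas

section chainLemmas
variable {n : ℕ}

lemma chain_congr (x0 : Fin n → ℝ) (ω ω' : ℕ → Pairs n) (k : ℕ)
    (h : ∀ m, m < k → ω m = ω' m) : chain x0 ω k = chain x0 ω' k := by
  induction k with
  | zero => rfl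
  | succ k ih =>
    show avgStep (ω k).1 (chain x0 ω k) = avgStep (ω' k).1 (chain x0 ω' k)
    rw [ih (fun m hm => h m (Nat.lt_succ_of_lt hm)), h k (Nat.lt_succ_self k)]

lemma chain_sum (x0 : Fin n → ℝ) (hsum : ∑ i, x0 i = 1) (ω : ℕ → Pairs n) (k : ℕ) :
    ∑ i, chain x0 ω k i = 1 := by
  induction k with
  | zero => exact hsum
  | succ k ih =>
    rw [show chain x0 ω (k + 1) = avgStep (ω k).1 (chain x0 ω k) from rfl,
      sum_avgStep (ω k).2]
    exact ih

/-- Extend a finite pair sequence by a junk value. -/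
noncomputable def extSeq (s0 : Pairs n) {k : ℕ} (σ : Fin k → Pairs n) : ℕ → Pairs n :=
  fun m => if h : m < k then σ ⟨m, h⟩ else s0

lemma sum_pairs_V (hn : (n : ℝ) ≠ 0) (s0 : Pairs n) (x : Fin n → ℝ) (hx : ∑ i, x i = 1) :
    ∑ s : Pairs n, Vfun n (avgStep s.1 x)
      = ((Fintype.card (Pairs n) : ℝ) - n / 2) * Vfun n x := by
  calc ∑ s : Pairs n, Vfun n (avgStep s.1 x)
      = ∑ s : Pairs n, (Vfun n x - (∑ p ∈ s.1.offDiag, (x p.1 - x p.2) ^ 2) / 4) :=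
        Finset.sum_congr rfl fun s _ => V_avg s x
    _ = (Fintype.card (Pairs n) : ℝ) * Vfun n x
        - (∑ s : Pairs n, ∑ p ∈ s.1.offDiag, (x p.1 - x p.2) ^ 2) / 4 := by
        rw [Finset.sum_sub_distrib, Finset.sum_const, Finset.card_univ, nsmul_eq_mul,
          ← Finset.sum_div]
    _ = ((Fintype.card (Pairs n) : ℝ) - n / 2) * Vfun n x := by
        rw [sum_pairs_offDiag s0 _ (fun i => by ring), sum_sq_diff hn x hx]
        ring

lemma sumV_chain (hn : (n : ℝ) ≠ 0) (s0 : Pairs n) (x0 : Fin n → ℝ)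
    (hsum : ∑ i, x0 i = 1) (k : ℕ) :
    ∑ σ : Fin k → Pairs n, Vfun n (chain x0 (extSeq s0 σ) k)
      = ((Fintype.card (Pairs n) : ℝ) - n / 2) ^ k * Vfun n x0 := by
  induction k with
  | zero =>
    rw [pow_zero, one_mul, Fintype.sum_unique]
    rfl
  | succ k ih =>
    rw [← Equiv.sum_comp (Fin.snocEquiv (fun _ : Fin (k + 1) => Pairs n))
      (fun σ => Vfun n (chain x0 (extSeq s0 σ) (k + 1))), Fintype.sum_prod_type]
    have key : ∀ (s : Pairs n) (τ : Fin k → Pairs n),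
        chain x0 (extSeq s0 ((Fin.snocEquiv (fun _ => Pairs n)) (s, τ))) (k + 1)
          = avgStep s.1 (chain x0 (extSeq s0 τ) k) := by
      intro s τ
      have hsnoc : ((Fin.snocEquiv fun _ : Fin (k+1) => Pairs n) (s, τ)) = Fin.snoc τ s := rfl
      have h1 : chain x0 (extSeq s0 ((Fin.snocEquiv (fun _ => Pairs n)) (s, τ))) k
          = chain x0 (extSeq s0 τ) k := by
        apply chain_congr
        intro m hm
        simp only [extSeq, hsnoc]
        rw [dif_pos (Nat.lt_succ_of_lt hm), dif_pos hm]
        exact Fin.snoc_castSucc (α := fun _ : Fin (k+1) => Pairs n) s τ ⟨m, hm⟩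
      have h2 : (extSeq s0 ((Fin.snocEquiv fun _ => Pairs n) (s, τ)) k) = s := by
        simp only [extSeq, hsnoc]
        rw [dif_pos (Nat.lt_succ_self k)]
        exact Fin.snoc_last (α := fun _ : Fin (k+1) => Pairs n) s τ
      show avgStep ((extSeq s0 ((Fin.snocEquiv fun _ => Pairs n) (s, τ)) k)).1 _ = _
      rw [h1, h2]
    calc ∑ s : Pairs n, ∑ τ : Fin k → Pairs n,
          Vfun n (chain x0 (extSeq s0 ((Fin.snocEquiv fun _ => Pairs n) (s, τ))) (k + 1))
        = ∑ τ : Fin k → Pairs n, ∑ s : Pairs n,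
            Vfun n (avgStep s.1 (chain x0 (extSeq s0 τ) k)) := by
          rw [Finset.sum_comm]
          exact Finset.sum_congr rfl fun τ _ => Finset.sum_congr rfl fun s _ => by rw [key]
      _ = ∑ τ : Fin k → Pairs n,
            ((Fintype.card (Pairs n) : ℝ) - n / 2) * Vfun n (chain x0 (extSeq s0 τ) k) :=
          Finset.sum_congr rfl fun τ _ =>
            sum_pairs_V hn s0 _ (chain_sum x0 hsum (extSeq s0 τ) k)
      _ = ((Fintype.card (Pairs n) : ℝ) - n / 2) ^ (k + 1) * Vfun n x0 := by
          rw [← Finset.mul_sum, ih]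
          ring

end chainLemmas

instance (n : ℕ) : MeasurableSingletonClass (Pairs n) := ⟨fun _ => trivial⟩

/-- **Fast decay for spread-out initial conditions.** If `x₀` is nonnegative with total
mass `1` and maximum entry at most `C/n` (`C ≥ 1`), then `E(T(k)) ≤ √C e^{-k/(2n)}`. -/
theorem expected_L1_bound_spread_initial (n : ℕ) (hn : 2 ≤ n)
    (μ : Measure (ℕ → Pairs n)) (hμ : IsProductLaw n μ)
    (C : ℝ) (hC : 1 ≤ C) (x0 : Fin n → ℝ)
    (hpos : ∀ i, 0 ≤ x0 i) (hsum : ∑ i, x0 i = 1)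
    (hmax : ∀ i, x0 i ≤ C / n) (k : ℕ) :
    ∫ ω, Tdist x0 ω k ∂μ ≤ Real.sqrt C * Real.exp (-(k : ℝ) / (2 * n)) := by
  classical
  have hn1 : (1 : ℕ) ≤ n := le_trans (by norm_num) hn
  have hnr2 : (2 : ℝ) ≤ (n : ℝ) := by exact_mod_cast hn
  have hnr0 : (0 : ℝ) < (n : ℝ) := by linarith
  have hnne : (n : ℝ) ≠ 0 := ne_of_gt hnr0
  -- a default pair
  have hab : (⟨0, by omega⟩ : Fin n) ≠ ⟨1, by omega⟩ := by simp [Fin.ext_iff]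
  set s0 : Pairs n := ⟨{⟨0, by omega⟩, ⟨1, by omega⟩}, Finset.card_pair hab⟩ with hs0
  haveI : Nonempty (Pairs n) := ⟨s0⟩
  set N : ℕ := Fintype.card (Pairs n) with hN
  have hNpos : 0 < N := Fintype.card_pos
  have h2N : 2 * N = n * (n - 1) := by
    have hev : Even ((n - 1) * n) := by
      have := Nat.even_mul_succ_self (n - 1)
      rwa [Nat.sub_add_cancel hn1] at this
    rw [hN, Fintype.card_finset_len, Fintype.card_fin, Nat.choose_two_right,
      Nat.mul_div_cancel' (mul_comm (n - 1) n ▸ hev.two_dvd)]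
  have h2Nr : 2 * (N : ℝ) = n * ((n : ℝ) - 1) := by
    have := h2N
    have h1 : ((n - 1 : ℕ) : ℝ) = (n : ℝ) - 1 := by
      rw [Nat.cast_sub hn1, Nat.cast_one]
    push_cast [← h1]
    exact_mod_cast this
  have hNr0 : (0 : ℝ) < (N : ℝ) := by exact_mod_cast hNpos
  set r : ℝ := ((N : ℝ) - n / 2) / N with hr
  have hr0 : 0 ≤ r := by
    apply div_nonneg _ (le_of_lt hNr0)
    nlinarith
  have hrle : r ≤ Real.exp (-1 / (n : ℝ)) := by
    have hexp := Real.add_one_le_exp (-1 / (n : ℝ))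
    have h1 : r = 1 - (n : ℝ) / (2 * N) := by
      rw [hr]
      field_simp
    have h2 : 1 / (n : ℝ) ≤ (n : ℝ) / (2 * N) := by
      rw [div_le_div_iff₀ hnr0 (by linarith)]
      nlinarith
    have h3 : r ≤ 1 - 1 / (n : ℝ) := by rw [h1]; linarith
    have h4 : (-1 : ℝ) / (n : ℝ) + 1 = 1 - 1 / (n : ℝ) := by ring
    rw [h4] at hexp
    linarith
  have hrk : r ^ k ≤ Real.exp (-(k : ℝ) / (n : ℝ)) := by
    calc r ^ k ≤ Real.exp (-1 / (n : ℝ)) ^ k := pow_le_pow_left₀ hr0 hrle k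
      _ = Real.exp (-(k : ℝ) / (n : ℝ)) := by
          rw [← Real.exp_nat_mul]
          congr 1
          ring
  -- initial energy
  have hVnn0 : 0 ≤ Vfun n x0 := Finset.sum_nonneg fun i _ => sq_nonneg _
  have hnV0 : (n : ℝ) * Vfun n x0 ≤ C := by
    have hsq : ∑ i, x0 i ^ 2 ≤ C / n := by
      calc ∑ i, x0 i ^ 2 ≤ ∑ i, (C / n) * x0 i :=
            Finset.sum_le_sum fun i _ => by nlinarith [hpos i, hmax i]
        _ = C / n := by rw [← Finset.mul_sum, hsum, mul_one]
    have hV0 : Vfun n x0 = (∑ i, x0 i ^ 2) - 1 / n := by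
      unfold Vfun
      have hexp2 : ∀ i : Fin n, (x0 i - 1 / (n : ℝ)) ^ 2
          = x0 i ^ 2 - 2 / n * x0 i + (1 / n) ^ 2 := fun i => by ring
      simp only [hexp2]
      rw [Finset.sum_add_distrib, Finset.sum_sub_distrib, ← Finset.mul_sum, hsum,
        Finset.sum_const, Finset.card_univ, Fintype.card_fin, nsmul_eq_mul]
      field_simp
      ring
    rw [hV0]
    have h5 : (n : ℝ) * (C / n) = C := by field_simp
    have h6 : (n : ℝ) * (1 / n) = 1 := by field_simp
    have h7 : (n : ℝ) * (∑ i, x0 i ^ 2) ≤ (n : ℝ) * (C / n) :=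
      mul_le_mul_of_nonneg_left hsq hnr0.le
    nlinarith
  -- measure-theoretic reduction to a finite sum
  have hproj : Measurable (fun ω : ℕ → Pairs n => fun i : Fin k => ω i) :=
    measurable_pi_lambda _ fun i => measurable_pi_apply _
  haveI hprob : IsProbabilityMeasure (uniformPair n) := by
    constructor
    rw [uniformPair, Measure.smul_apply, Measure.count_univ, ENat.card_eq_coe_fintype_card, ENat.toENNReal_coe, smul_eq_mul,
      ENNReal.inv_mul_cancel (by exact_mod_cast hNpos.ne' : (Fintype.card (Pairs n) : ℝ≥0∞) ≠ 0)
      (by simp)]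
  set F : (Fin k → Pairs n) → ℝ := fun σ => Tdist x0 (extSeq s0 σ) k with hF
  have hTd : ∀ ω : ℕ → Pairs n, Tdist x0 ω k = F (fun i : Fin k => ω i) := by
    intro ω
    show Tdist x0 ω k = Tdist x0 (extSeq s0 fun i : Fin k => ω i) k
    unfold Tdist
    rw [chain_congr x0 ω (extSeq s0 fun i : Fin k => ω i) k
      (fun m hm => by unfold extSeq; rw [dif_pos hm])]
  set w : ℝ := ((N : ℝ)⁻¹) ^ k with hw
  have hw0 : 0 ≤ w := by positivity
  have hsingle : ∀ σ : Fin k → Pairs n,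
      ((Measure.pi fun _ : Fin k => uniformPair n) {σ}).toReal = w := by
    intro σ
    rw [← Set.univ_pi_singleton, Measure.pi_pi]
    have huni : ∀ i : Fin k, uniformPair n {σ i} = ((N : ℝ≥0∞))⁻¹ := by
      intro i
      rw [uniformPair, Measure.smul_apply, Measure.count_singleton, smul_eq_mul, mul_one]
    simp only [huni, Finset.prod_const, Finset.card_univ, Fintype.card_fin]
    rw [ENNReal.toReal_pow, ENNReal.toReal_inv]
    simp [hw]
  have hint : ∫ ω, Tdist x0 ω k ∂μ = ∑ σ : Fin k → Pairs n, w * F σ := by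
    have hmap := hμ k
    have hFae : AEStronglyMeasurable F (μ.map (fun ω (i : Fin k) => ω i)) :=
      (measurable_of_countable F).aestronglyMeasurable
    calc ∫ ω, Tdist x0 ω k ∂μ = ∫ ω, F (fun i : Fin k => ω i) ∂μ := by simp_rw [hTd]
      _ = ∫ σ, F σ ∂(μ.map (fun ω (i : Fin k) => ω i)) :=
        (integral_map hproj.aemeasurable hFae).symm
      _ = ∫ σ, F σ ∂(Measure.pi fun _ : Fin k => uniformPair n) := by rw [hmap]
      _ = ∑ σ : Fin k → Pairs n,
            ((Measure.pi fun _ : Fin k => uniformPair n) {σ}).toReal • F σ :=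
        integral_fintype Integrable.of_finite
      _ = ∑ σ : Fin k → Pairs n, w * F σ := by
          exact Finset.sum_congr rfl fun σ _ => by rw [hsingle σ, smul_eq_mul]
  -- pointwise Cauchy–Schwarz: T ≤ √(n V)
  set V : (Fin k → Pairs n) → ℝ := fun σ => Vfun n (chain x0 (extSeq s0 σ) k) with hV
  have hVnn : ∀ σ, 0 ≤ V σ := fun σ => Finset.sum_nonneg fun i _ => sq_nonneg _
  have hTleV : ∀ σ, F σ ≤ Real.sqrt ((n : ℝ) * V σ) := by
    intro σ
    have hnn : 0 ≤ F σ := Finset.sum_nonneg fun i _ => abs_nonneg _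
    rw [Real.le_sqrt hnn (mul_nonneg hnr0.le (hVnn σ))]
    have hcs := Finset.sum_mul_sq_le_sq_mul_sq Finset.univ (fun _ : Fin n => (1 : ℝ))
      (fun i => |chain x0 (extSeq s0 σ) k i - 1 / n|)
    simp only [one_mul, one_pow, Finset.sum_const, Finset.card_univ, Fintype.card_fin,
      nsmul_eq_mul, mul_one, sq_abs] at hcs
    exact hcs
  -- sum of weights is 1
  have hNne : (N : ℝ) ≠ 0 := ne_of_gt hNr0
  have hsumw : ∑ _σ : Fin k → Pairs n, w = 1 := by
    rw [Finset.sum_const, Finset.card_univ, Fintype.card_fun, Fintype.card_fin,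
      nsmul_eq_mul, hw]
    push_cast
    rw [← mul_pow, mul_inv_cancel₀ hNne, one_pow]
  -- energy identity
  have hsumV : ∑ σ : Fin k → Pairs n, w * ((n : ℝ) * V σ) = (n : ℝ) * Vfun n x0 * r ^ k := by
    rw [← Finset.mul_sum, ← Finset.mul_sum]
    show w * ((n : ℝ) * ∑ σ : Fin k → Pairs n, Vfun n (chain x0 (extSeq s0 σ) k)) = _
    rw [sumV_chain hnne s0 x0 hsum k, ← hN, hr, hw, div_pow]
    field_simp
    have hNk : ((1:ℝ) / N) ^ k * (N:ℝ) ^ k = 1 := by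
      rw [← mul_pow, one_div, inv_mul_cancel₀ hNne, one_pow]
    linear_combination (((N:ℝ) * 2 - n) / 2) ^ k * Vfun n x0 * hNk
  -- Jensen / Cauchy–Schwarz on the finite sum
  set B : ℝ := ∑ σ : Fin k → Pairs n, w * Real.sqrt ((n : ℝ) * V σ) with hB
  have hBnn : 0 ≤ B := Finset.sum_nonneg fun σ _ => mul_nonneg hw0 (Real.sqrt_nonneg _)
  have hB2 : B ^ 2 ≤ (n : ℝ) * Vfun n x0 * r ^ k := by
    have hcs := Finset.sum_mul_sq_le_sq_mul_sq Finset.univ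
      (fun _ : Fin k → Pairs n => Real.sqrt w)
      (fun σ => Real.sqrt w * Real.sqrt ((n : ℝ) * V σ))
    have h1 : ∀ σ : Fin k → Pairs n,
        Real.sqrt w * (Real.sqrt w * Real.sqrt ((n : ℝ) * V σ))
          = w * Real.sqrt ((n : ℝ) * V σ) := by
      intro σ; rw [← mul_assoc, Real.mul_self_sqrt hw0]
    have h2 : ∀ σ : Fin k → Pairs n,
        (Real.sqrt w * Real.sqrt ((n : ℝ) * V σ)) ^ 2 = w * ((n : ℝ) * V σ) := by
      intro σ
      rw [mul_pow, Real.sq_sqrt hw0, Real.sq_sqrt (mul_nonneg hnr0.le (hVnn σ))]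
    simp only [h1, h2, Real.sq_sqrt hw0] at hcs
    rw [hsumw, one_mul, hsumV] at hcs
    exact hcs
  have hfinal : B ≤ Real.sqrt C * Real.exp (-(k : ℝ) / (2 * n)) := by
    have hB2' : B ^ 2 ≤ C * Real.exp (-(k : ℝ) / n) := by
      calc B ^ 2 ≤ (n : ℝ) * Vfun n x0 * r ^ k := hB2
        _ ≤ C * r ^ k := by
            apply mul_le_mul_of_nonneg_right hnV0 (pow_nonneg hr0 k)
        _ ≤ C * Real.exp (-(k : ℝ) / n) := by
            apply mul_le_mul_of_nonneg_left hrk (by linarith)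
    have hsq : Real.sqrt (C * Real.exp (-(k : ℝ) / n))
        = Real.sqrt C * Real.exp (-(k : ℝ) / (2 * n)) := by
      rw [Real.sqrt_mul (by linarith : (0:ℝ) ≤ C), ← Real.exp_half]
      congr 1
      ring
    rw [← hsq]
    exact (Real.le_sqrt hBnn (by positivity)).mpr hB2'
  calc ∫ ω, Tdist x0 ω k ∂μ = ∑ σ : Fin k → Pairs n, w * F σ := hint
    _ ≤ B := Finset.sum_le_sum fun σ _ => mul_le_mul_of_nonneg_left (hTleV σ) hw0
    _ ≤ Real.sqrt C * Real.exp (-(k : ℝ) / (2 * n)) := hfinal
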